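/- arXiv:2405.02130 — 6 statements merged into one kernel-verified Lean document; each statement's English description precedes it below -/
import Mathlib

section
/- Let (g, ⟨·,·⟩) be a Lie algebra with a non-degenerate symmetric bilinear form, ∗ its Levi–Civita product (defined by 2⟨x∗y, z⟩ = ⟨[x,y],z⟩ − ⟨[y,z],x⟩ + ⟨[z,x],y⟩), and let I be a one-dimensional totally isotropic subspace that is a two-sided ideal of (g, ∗). Then I^⊥ is a right ideal of (g, ∗) if and only if I^⊥ ∗ I = 0. -/
/-- For the Levi–Civita product ∗ and a 1-dimensional totally isotropic
two-sided ideal I of (g,∗), I^⊥ is a right ideal of (g,∗) iff I^⊥ ∗ I = 0. -/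
theorem stmt3 {V : Type*} [AddCommGroup V] [Module ℝ V] [FiniteDimensional ℝ V]
    (br : V →ₗ[ℝ] V →ₗ[ℝ] V)
    (hanti : ∀ x y : V, br x y = - br y x)
    (hjac : ∀ x y z : V, br x (br y z) = br (br x y) z + br y (br x z))
    (Bf : LinearMap.BilinForm ℝ V)
    (hsymm : ∀ x y : V, Bf x y = Bf y x)
    (hnd : Bf.Nondegenerate)
    (star : V →ₗ[ℝ] V →ₗ[ℝ] V)
    (hstar : ∀ x y z : V,
      2 * Bf (star x y) z = Bf (br x y) z - Bf (br y z) x + Bf (br z x) y)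
    (I : Submodule ℝ V)
    (hdim : Module.finrank ℝ I = 1)
    (hiso : I ≤ Bf.orthogonal I)
    (hideal : ∀ x ∈ I, ∀ y : V, star x y ∈ I ∧ star y x ∈ I) :
    (∀ y ∈ Bf.orthogonal I, ∀ z : V, star y z ∈ Bf.orthogonal I) ↔
      (∀ y ∈ Bf.orthogonal I, ∀ x ∈ I, star y x = 0) := by
  -- key skew identity: Bf (star x y) z = - Bf (star x z) y
  have key : ∀ x y z : V, Bf (star x y) z = - Bf (star x z) y := by
    intro x y z
    have h1 := hstar x y z
    have h2 := hstar x z y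
    have e1 : Bf (br x z) y = - Bf (br z x) y := by rw [hanti x z]; simp
    have e2 : Bf (br z y) x = - Bf (br y z) x := by rw [hanti z y]; simp
    have e3 : Bf (br y x) z = - Bf (br x y) z := by rw [hanti y x]; simp
    linarith
  constructor
  · intro h y hy x hx
    apply hnd.1
    intro z
    have hz := h y hy z
    have : Bf x (star y z) = 0 := hz x hx
    rw [key y x z, hsymm (star y z) x, this, neg_zero]
  · intro h y hy z
    intro x hx
    have h0 : star y x = 0 := h y hy x hx
    show Bf x (star y z) = 0
    rw [← hsymm (star y z) x, key y z x, h0]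
    simp
end

section
/- In the double extension g = ℝa ⊕ B ⊕ ℝd, where B carries a commutative associative product ∘_B and a non-degenerate symmetric form ⟨·,·⟩', and where the product ∘ on g is defined by a∘a = a∘x = x∘a = 0, x∘y = ⟨v(x),y⟩'·a + x∘_B y, a∘d = d∘a = λa, d∘d = βa + a₀ + λd, d∘x = x∘d = ⟨a₀,x⟩'·a + v(x) (for x,y ∈ B, λ,β ∈ ℝ, a₀ ∈ B, v : B → B linear self-adjoint with v(x∘_B y) = v(x)∘_B y), the product ∘ is associative if and only if v² = λv + r_{a₀}, where r_{a₀}(x) = x ∘_B a₀. -/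
/-- In the double extension g = ℝa ⊕ B ⊕ ℝd (encoded as ℝ × B × ℝ, with
a = (1,0,0) and d = (0,0,1)), the extended product ∘ is associative iff
v² = λ·v + r_{a₀}. -/
theorem stmt5 {B : Type*} [AddCommGroup B] [Module ℝ B] [FiniteDimensional ℝ B]
    (circB : B →ₗ[ℝ] B →ₗ[ℝ] B)
    (hcomm : ∀ x y : B, circB x y = circB y x)
    (hassoc : ∀ x y z : B, circB (circB x y) z = circB x (circB y z))
    (Bf : LinearMap.BilinForm ℝ B)
    (hsymm : ∀ x y : B, Bf x y = Bf y x)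
    (hnd : Bf.Nondegenerate)
    (hfrob : ∀ x y z : B, Bf (circB x y) z = Bf x (circB y z))
    (v : B →ₗ[ℝ] B)
    (hvsa : ∀ x y : B, Bf (v x) y = Bf x (v y))
    (hvc : ∀ x y : B, v (circB x y) = circB (v x) y)
    (a₀ : B) (lam beta : ℝ)
    (mul : (ℝ × B × ℝ) → (ℝ × B × ℝ) → (ℝ × B × ℝ))
    (hmul : ∀ p q : ℝ × B × ℝ, mul p q =
      (Bf (v p.2.1) q.2.1 + lam * (p.1 * q.2.2 + q.1 * p.2.2) + beta * (p.2.2 * q.2.2)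
          + p.2.2 * Bf a₀ q.2.1 + q.2.2 * Bf a₀ p.2.1,
       circB p.2.1 q.2.1 + (p.2.2 * q.2.2) • a₀ + p.2.2 • v q.2.1 + q.2.2 • v p.2.1,
       lam * (p.2.2 * q.2.2))) :
    (∀ p q r : ℝ × B × ℝ, mul (mul p q) r = mul p (mul q r)) ↔
      (∀ x : B, v (v x) = lam • v x + circB x a₀) := by
  have hswap : ∀ u w : B, circB u (v w) = circB (v u) w := by
    intro u w
    rw [hcomm, ← hvc, hcomm, hvc]
  constructor
  · intro h x
    have h2 := congrArg (fun t => t.2.1) (h (0, x, 0) (0, 0, 1) (0, 0, 1))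
    simp [hmul] at h2
    rw [h2, add_comm]
  · intro hv p q r
    obtain ⟨α, x, δ⟩ := p; obtain ⟨β', y, ε⟩ := q; obtain ⟨γ, z, η⟩ := r
    simp only [hmul]
    refine Prod.ext ?_ (Prod.ext ?_ ?_)
    · dsimp only
      simp only [map_add, map_smul, hvc, hv, hswap, hcomm a₀, LinearMap.add_apply,
        LinearMap.smul_apply, smul_eq_mul, hfrob, hvsa]
      have h1 : ∀ u w : B, Bf a₀ (circB u w) = Bf u (circB w a₀) := by
        intro u w; conv_rhs => rw [← hfrob, ← hsymm]
      have h2 : Bf a₀ (v x) = Bf x (v a₀) := by rw [← hvsa, hsymm]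
      linear_combination η * h1 x y - δ * h1 y z + ε * η * h2
    · dsimp only
      simp only [map_add, map_smul, LinearMap.add_apply, LinearMap.smul_apply, hvc, hv,
        hassoc, hswap, hcomm a₀]
      module
    · dsimp only; ring
end

section
/- In the double extension g = ℝa ⊕ B ⊕ ℝd with product ∘ defined by a∘a = a∘x = x∘a = 0, x∘y = ⟨v(x),y⟩'·a + x∘_B y, a∘d = γ'a, d∘d = βa + a₀ + γd, d∘x = ωa + t(x) (for x,y ∈ B with arbitrary scalars γ', γ, β, ω and linear map t : B → B), and scalar product ⟨·,·⟩ extending ⟨·,·⟩' with ⟨a,d⟩ = 1, ⟨a,a⟩ = ⟨d,d⟩ = 0, and ℝa ⊕ ℝd orthogonal to B, the product ∘ satisfies the Frobenius identity ⟨u∘w, z⟩ = ⟨u, w∘z⟩ on g if and only if t = v, γ' = γ, and ω(x) = ⟨a₀, x⟩' for all x ∈ B. -/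
/-- The candidate double extension product satisfies the Frobenius identity
with respect to the extended scalar product iff t = v, γ' = γ and ω = ⟨a₀,·⟩'. -/
theorem stmt6 {B : Type*} [AddCommGroup B] [Module ℝ B] [FiniteDimensional ℝ B]
    (circB : B →ₗ[ℝ] B →ₗ[ℝ] B)
    (hcomm : ∀ x y : B, circB x y = circB y x)
    (hassoc : ∀ x y z : B, circB (circB x y) z = circB x (circB y z))
    (Bf : LinearMap.BilinForm ℝ B)
    (hsymm : ∀ x y : B, Bf x y = Bf y x)
    (hnd : Bf.Nondegenerate)
    (hfrob : ∀ x y z : B, Bf (circB x y) z = Bf x (circB y z))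
    (v : B →ₗ[ℝ] B)
    (hvsa : ∀ x y : B, Bf (v x) y = Bf x (v y))
    (hvc : ∀ x y : B, v (circB x y) = circB (v x) y)
    (a₀ : B) (gamma' gamma beta : ℝ) (ω : B →ₗ[ℝ] ℝ) (t : B →ₗ[ℝ] B)
    (mul : (ℝ × B × ℝ) → (ℝ × B × ℝ) → (ℝ × B × ℝ))
    (hmul : ∀ p q : ℝ × B × ℝ, mul p q =
      (Bf (v p.2.1) q.2.1 + gamma' * (p.1 * q.2.2 + q.1 * p.2.2)
          + beta * (p.2.2 * q.2.2) + p.2.2 * ω q.2.1 + q.2.2 * ω p.2.1,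
       circB p.2.1 q.2.1 + (p.2.2 * q.2.2) • a₀ + p.2.2 • t q.2.1 + q.2.2 • t p.2.1,
       gamma * (p.2.2 * q.2.2)))
    (Bg : (ℝ × B × ℝ) → (ℝ × B × ℝ) → ℝ)
    (hBg : ∀ p q : ℝ × B × ℝ, Bg p q = p.1 * q.2.2 + q.1 * p.2.2 + Bf p.2.1 q.2.1) :
    (∀ p q r : ℝ × B × ℝ, Bg (mul p q) r = Bg p (mul q r)) ↔
      (t = v ∧ gamma' = gamma ∧ ∀ x : B, ω x = Bf a₀ x) := by
  constructor
  · intro h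
    refine ⟨?_, ?_, ?_⟩
    · ext y
      have key : ∀ x : B, Bf x (t y - v y) = 0 := by
        intro x
        have h1 := h (0, x, 0) (0, y, 0) (0, 0, 1)
        simp [hmul, hBg] at h1
        have h2 : Bf (v x) y = Bf x (v y) := hvsa x y
        simp [map_sub]
        linarith [h1, h2]
      have : Bf (t y - v y) = 0 := by
        ext n
        rw [LinearMap.zero_apply, hsymm]
        exact key n
      have := hnd.1 _ (fun n => by rw [this]; rfl)
      simpa [sub_eq_zero] using this
    · have h1 := h (1, 0, 0) (0, 0, 1) (0, 0, 1)
      simp [hmul, hBg] at h1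
      linarith
    · intro x
      have h1 := h (0, x, 0) (0, 0, 1) (0, 0, 1)
      simp [hmul, hBg] at h1
      rw [hsymm]
      linarith
  · rintro ⟨rfl, rfl, hω⟩
    intro p q r
    simp only [hmul, hBg, map_add, map_smul, LinearMap.add_apply, LinearMap.smul_apply,
      smul_eq_mul, hω]
    linear_combination (hfrob p.2.1 q.2.1 r.2.1) + r.2.2 * hvsa p.2.1 q.2.1
      + q.2.2 * hvsa p.2.1 r.2.1 + (q.2.2 * r.2.2) * hsymm a₀ p.2.1
end

section
/- In the flat pseudo-Riemannian F double extension g = ℝa ⊕ B ⊕ ℝd with λ ≠ 0, an element e = γ'a + ē + ω'd (γ', ω' ∈ ℝ, ē ∈ B) is a unit for the product ∘ (given by a∘a = a∘x = 0, x∘y = ⟨v(x),y⟩'a + x∘_B y, a∘d = λa, d∘d = βa + a₀ + λd, d∘x = ⟨a₀,x⟩'a + v(x)) if and only if ω' = 1/λ, γ' = −(⟨a₀, ē⟩'/λ + β/λ²), v(ē) = −a₀/λ, and r_ē + v/λ = id_B, where r_ē(x) = x ∘_B ē. -/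
/-- In the double extension (encoded on ℝ × B × ℝ, a = (1,0,0),
d = (0,0,1)) with λ ≠ 0, e = γ'a + ē + ω'd is a unit for ∘ iff
ω' = 1/λ, γ' = −(⟨a₀,ē⟩'/λ + β/λ²), v(ē) = −a₀/λ, and r_ē + v/λ = id. -/
theorem stmt11 {B : Type*} [AddCommGroup B] [Module ℝ B] [FiniteDimensional ℝ B]
    (circB : B →ₗ[ℝ] B →ₗ[ℝ] B)
    (hcomm : ∀ x y : B, circB x y = circB y x)
    (hassoc : ∀ x y z : B, circB (circB x y) z = circB x (circB y z))
    (Bf : LinearMap.BilinForm ℝ B)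
    (hsymm : ∀ x y : B, Bf x y = Bf y x)
    (hnd : Bf.Nondegenerate)
    (hfrob : ∀ x y z : B, Bf (circB x y) z = Bf x (circB y z))
    (v : B →ₗ[ℝ] B)
    (hvsa : ∀ x y : B, Bf (v x) y = Bf x (v y))
    (hvc : ∀ x y : B, v (circB x y) = circB (v x) y)
    (a₀ : B) (lam beta : ℝ) (hlam : lam ≠ 0)
    (mul : (ℝ × B × ℝ) → (ℝ × B × ℝ) → (ℝ × B × ℝ))
    (hmul : ∀ p q : ℝ × B × ℝ, mul p q =
      (Bf (v p.2.1) q.2.1 + lam * (p.1 * q.2.2 + q.1 * p.2.2) + beta * (p.2.2 * q.2.2)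
          + p.2.2 * Bf a₀ q.2.1 + q.2.2 * Bf a₀ p.2.1,
       circB p.2.1 q.2.1 + (p.2.2 * q.2.2) • a₀ + p.2.2 • v q.2.1 + q.2.2 • v p.2.1,
       lam * (p.2.2 * q.2.2)))
    (gamma' omega' : ℝ) (ebar : B) :
    (∀ p : ℝ × B × ℝ, mul (gamma', ebar, omega') p = p) ↔
      (omega' = 1 / lam ∧
       gamma' = -(Bf a₀ ebar / lam + beta / lam ^ 2) ∧
       v ebar = (-(1 / lam)) • a₀ ∧
       ∀ x : B, circB x ebar + (1 / lam) • v x = x) := by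
  constructor
  · intro h
    have h1 := h (0, 0, 1)
    rw [hmul] at h1
    simp [Prod.ext_iff] at h1
    obtain ⟨ha, hb, hc⟩ := h1
    have hω : omega' = 1 / lam := by field_simp; linarith
    refine ⟨hω, ?_, ?_, ?_⟩
    · subst hω
      field_simp at ha ⊢
      linear_combination ha
    · subst hω
      have : v ebar = -((1/lam) • a₀) := by
        rw [eq_neg_iff_add_eq_zero, add_comm]; exact hb
      rw [this, neg_smul]
    · intro x
      have h2 := h (0, x, 0)
      rw [hmul] at h2
      simp [Prod.ext_iff] at h2
      rw [← hω, hcomm]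
      exact h2.2
  · rintro ⟨hω, hγ, hv, hr⟩
    intro p
    rw [hmul]
    obtain ⟨p1, p2, p3⟩ := p
    simp only [Prod.ext_iff]
    subst hω hγ
    refine ⟨?_, ?_, ?_⟩
    · show Bf (v ebar) p2 + _ + _ + _ + _ = p1
      rw [hv]
      simp only [map_smul, LinearMap.smul_apply, smul_eq_mul]
      field_simp
      ring
    · show circB ebar p2 + _ + _ + _ = p2
      rw [hv]
      have h2 : circB ebar p2 = p2 - (1/lam) • v p2 := by
        rw [eq_sub_iff_add_eq, hcomm]; exact hr p2
      rw [h2]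
      module
    · show lam * (1/lam * p3) = p3
      field_simp
end

section
/- In the double extension of a weakly abelian bi-nilpotent Riemannian F-Lie algebra with λ = 0, the identity v² = r_{a₀} together with nilpotency of the product ∘_B implies that v is nilpotent, and consequently the extended product ∘ on g = ℝa ⊕ B ⊕ ℝd is nilpotent (every right multiplication is nilpotent). Specifically: if v : B → B is linear with v(x∘_B y) = v(x)∘_B y and v² = r_{a₀} where every right multiplication r_z of (B, ∘_B) is nilpotent, then v is nilpotent. -/
/-- If v : B → B is linear with v(x ∘ y) = v(x) ∘ y and v² = r_{a₀},
where every right multiplication of the commutative associative nilpotent product ∘ is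
nilpotent, then v is nilpotent. -/
theorem stmt14 {B : Type*} [AddCommGroup B] [Module ℝ B] [FiniteDimensional ℝ B]
    (circB : B →ₗ[ℝ] B →ₗ[ℝ] B)
    (hcomm : ∀ x y : B, circB x y = circB y x)
    (hassoc : ∀ x y z : B, circB (circB x y) z = circB x (circB y z))
    (hnil : ∀ z : B, ∃ n : ℕ, ∀ x : B, (fun x => circB x z)^[n] x = 0)
    (v : B →ₗ[ℝ] B)
    (hvc : ∀ x y : B, v (circB x y) = circB (v x) y)
    (a₀ : B)
    (hv2 : ∀ x : B, v (v x) = circB x a₀) :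
    ∃ n : ℕ, ∀ x : B, (fun x => v x)^[n] x = 0 := by
  obtain ⟨n, hn⟩ := hnil a₀
  have key : ∀ k : ℕ, ∀ x : B, (fun x => v x)^[2 * k] x = (fun x => circB x a₀)^[k] x := by
    intro k
    induction k with
    | zero => intro x; simp
    | succ k ih =>
      intro x
      have h2 : 2 * (k + 1) = (2 * k) + 1 + 1 := by ring
      rw [h2, Function.iterate_succ_apply', Function.iterate_succ_apply', ih,
        Function.iterate_succ_apply']
      exact hv2 _
  exact ⟨2 * n, fun x => by rw [key n x]; exact hn x⟩
end

section
/- On the 2-dimensional Lie algebra aff(ℝ) = span(a,d) with [d,a] = a, define for λ, β ∈ ℝ the commutative product ∘ by d∘d = βa + λd, d∘a = a∘d = λa, a∘a = 0. Then ∘ is associative, satisfies the Frobenius identity with respect to ⟨d,a⟩ = 1, ⟨a,a⟩ = ⟨d,d⟩ = 0, and satisfies the Hertling–Manin relation HM(x,y,z,w) = 0 for all x,y,z,w. Moreover, if λ = 1 and β = 0 then d is a unit element for ∘. -/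
/-- aff(ℝ) encoded as ℝ × ℝ with a = (1,0) and d = (0,1): the Lie bracket [d,a] = a. -/
def affBr (p q : ℝ × ℝ) : ℝ × ℝ := (p.2 * q.1 - q.2 * p.1, 0)

/-- The Lorentzian form ⟨d,a⟩ = 1, ⟨a,a⟩ = ⟨d,d⟩ = 0 on aff(ℝ). -/
def affB (p q : ℝ × ℝ) : ℝ := p.1 * q.2 + q.1 * p.2

/-- The commutative product d∘d = βa + λd, d∘a = λa, a∘a = 0 on aff(ℝ). -/
def affCirc (lam beta : ℝ) (p q : ℝ × ℝ) : ℝ × ℝ :=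
  (beta * (p.2 * q.2) + lam * (p.1 * q.2 + q.1 * p.2), lam * (p.2 * q.2))

/-- The Hertling–Manin expression. -/
def HMf {G : Type*} [AddCommGroup G] (mul br : G → G → G) (x y z w : G) : G :=
  br (mul x y) (mul z w) - mul (br (mul x y) z) w - mul (br (mul x y) w) z
    - mul x (br y (mul z w)) + mul x (mul (br y z) w) + mul x (mul (br y w) z)
    - mul y (br x (mul z w)) + mul y (mul (br x z) w) + mul y (mul (br x w) z)

/-- On aff(ℝ), the product ∘ is associative, satisfies the Frobenius
identity, satisfies the Hertling–Manin relation, and for λ = 1, β = 0 the element d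
is a unit. -/
theorem stmt17 (lam beta : ℝ) :
    (∀ x y z : ℝ × ℝ,
      affCirc lam beta (affCirc lam beta x y) z = affCirc lam beta x (affCirc lam beta y z)) ∧
    (∀ x y z : ℝ × ℝ, affB (affCirc lam beta x y) z = affB x (affCirc lam beta y z)) ∧
    (∀ x y z w : ℝ × ℝ, HMf (affCirc lam beta) affBr x y z w = 0) ∧
    ((lam = 1 ∧ beta = 0) → ∀ p : ℝ × ℝ, affCirc lam beta ((0 : ℝ), (1 : ℝ)) p = p) := by
  refine ⟨?_, ?_, ?_, ?_⟩
  · intro x y z; simp only [affCirc, Prod.ext_iff]; constructor <;> ring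
  · intro x y z; simp only [affCirc, affB]; ring
  · intro x y z w
    simp only [HMf, affCirc, affBr, Prod.ext_iff, Prod.fst_add, Prod.snd_add,
      Prod.fst_sub, Prod.snd_sub, Prod.mk.injEq, Prod.fst_zero, Prod.snd_zero]
    constructor <;> ring
  · rintro ⟨rfl, rfl⟩ p
    simp only [affCirc, Prod.ext_iff]; constructor <;> ring
end
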